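/- Let A_Γ be an Artin-Tits group whose Coxeter graph Γ is not connected. Then the graph of irreducible parabolic subgroups C_parab(Γ) has diameter at most 2. -/

import Mathlib

/-- `Π(a,b;k)`: the alternating word `(ab)^{k/2}` if `k` is even, `(ab)^{(k-1)/2} a` if odd. -/
def piWord {S : Type*} (a b : S) (k : ℕ) : FreeGroup S :=
  (FreeGroup.of a * FreeGroup.of b) ^ (k / 2) * (if k % 2 = 1 then FreeGroup.of a else 1)

/-- The Artin-Tits relations associated to the Coxeter-type matrix `m` (with the
conventions `m a b = 2` for commutation and `m a b = 0` for no relation). -/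
def artinRels {S : Type*} (m : S → S → ℕ) : Set (FreeGroup S) :=
  {r | ∃ a b : S, 2 ≤ m a b ∧ r = piWord a b (m a b) * (piWord b a (m a b))⁻¹}

/-- The Coxeter graph of the matrix `m`: two distinct generators are joined by an edge
iff they do not commute (`m a b ≠ 2`, including the case of no relation). -/
def coxeterGraph {S : Type*} (m : S → S → ℕ) : SimpleGraph S where
  Adj a b := a ≠ b ∧ (m a b ≠ 2 ∨ m b a ≠ 2)
  symm := ⟨fun _ _ h => ⟨h.1.symm, h.2.symm⟩⟩
  loopless := ⟨fun _ h => h.1 rfl⟩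

/-- `P` is a proper irreducible parabolic subgroup of the Artin-Tits group `A_Γ`: a
conjugate of the standard parabolic subgroup generated by a nonempty proper subset `X`
of the generators inducing a connected subgraph of the Coxeter graph. -/
def IsProperIrredParabolic {S : Type*} (m : S → S → ℕ)
    (P : Subgroup (PresentedGroup (artinRels m))) : Prop :=
  ∃ (g : PresentedGroup (artinRels m)) (X : Set S), X.Nonempty ∧ X ≠ Set.univ ∧
    ((coxeterGraph m).induce X).Connected ∧
    P = (Subgroup.closure ((PresentedGroup.of : S → PresentedGroup (artinRels m)) '' X)).map
        (MulAut.conj g).toMonoidHom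

/-- The graph of irreducible parabolic subgroups `C_parab(Γ)`: vertices are the proper
irreducible parabolic subgroups; two distinct vertices are adjacent if one contains
the other, or if they intersect trivially and commute elementwise. -/
def parabGraph {S : Type*} (m : S → S → ℕ) :
    SimpleGraph {P : Subgroup (PresentedGroup (artinRels m)) // IsProperIrredParabolic m P} where
  Adj P Q := P ≠ Q ∧
    (P.1 ≤ Q.1 ∨ Q.1 ≤ P.1 ∨
      (P.1 ⊓ Q.1 = ⊥ ∧ ∀ p ∈ P.1, ∀ q ∈ Q.1, Commute p q))
  symm := by
    constructor
    rintro P Q ⟨hne, h⟩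
    refine ⟨hne.symm, ?_⟩
    rcases h with h | h | ⟨hint, hcomm⟩
    · exact Or.inr (Or.inl h)
    · exact Or.inl h
    · exact Or.inr (Or.inr ⟨by rwa [inf_comm], fun q hq p hp => (hcomm p hp q hq).symm⟩)
  loopless := ⟨fun P h => h.1 rfl⟩

namespace Scratch
open Subgroup PresentedGroup

variable {S : Type*} {m : S → S → ℕ}

lemma hom_piWord {G : Type*} [Group G] (φ : FreeGroup S →* G) (a b : S) (k : ℕ) :
    φ (piWord a b k) =
      (φ (FreeGroup.of a) * φ (FreeGroup.of b)) ^ (k / 2) *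
        (if k % 2 = 1 then φ (FreeGroup.of a) else 1) := by
  simp only [piWord, map_mul, map_pow, apply_ite φ, map_one]

lemma rel_cond {G : Type*} [Group G] (f : S → G)
    (hf : ∀ a b : S, 2 ≤ m a b →
      (f a * f b) ^ (m a b / 2) * (if m a b % 2 = 1 then f a else 1)
        = (f b * f a) ^ (m a b / 2) * (if m a b % 2 = 1 then f b else 1)) :
    ∀ r ∈ artinRels m, FreeGroup.lift f r = 1 := by
  rintro r ⟨a, b, hab, rfl⟩
  rw [map_mul, map_inv, hom_piWord, hom_piWord]
  simp only [FreeGroup.lift_apply_of]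
  rw [hf a b hab, mul_inv_cancel]

/-- exponent-sum homomorphism, all generators ↦ 1 -/
noncomputable def expSum (m : S → S → ℕ) :
    PresentedGroup (artinRels m) →* Multiplicative ℤ :=
  PresentedGroup.toGroup (f := fun _ => Multiplicative.ofAdd 1)
    (rel_cond _ (fun _ _ _ => rfl))

lemma of_ne_one (m : S → S → ℕ) (t : S) :
    (PresentedGroup.of t : PresentedGroup (artinRels m)) ≠ 1 := by
  intro h
  have := congrArg (expSum m) h
  rw [map_one] at this
  rw [expSum, PresentedGroup.toGroup.of] at this
  have h2 : (1 : ℤ) = 0 := congrArg Multiplicative.toAdd this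
  exact one_ne_zero h2

lemma mk_piWord_eq (m : S → S → ℕ) {a b : S} (h : 2 ≤ m a b) :
    PresentedGroup.mk (artinRels m) (piWord a b (m a b)) =
      PresentedGroup.mk (artinRels m) (piWord b a (m a b)) := by
  rw [← mul_inv_eq_one, ← map_inv, ← map_mul]
  exact (QuotientGroup.eq_one_iff _).mpr
    (Subgroup.subset_normalClosure ⟨a, b, h, rfl⟩)

lemma commute_of_eq_two {a b : S} (h : m a b = 2) :
    Commute (PresentedGroup.of a : PresentedGroup (artinRels m)) (PresentedGroup.of b) := by
  have := mk_piWord_eq m (a := a) (b := b) (by omega)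
  rw [hom_piWord, hom_piWord, h] at this
  simp [Commute, SemiconjBy] at this
  exact this


lemma m_eq_two_of_not_adj (hsym : ∀ a b : S, m a b = m b a) {a b : S} (hne : a ≠ b)
    (hnadj : ¬ (coxeterGraph m).Adj a b) : m a b = 2 := by
  by_contra h
  exact hnadj (show _ ∧ _ from ⟨hne, Or.inl h⟩)

section Retr

variable (m) (D : Set S)
variable (hD : ∀ a b : S, (coxeterGraph m).Adj a b → (a ∈ D ↔ b ∈ D))
variable (hsym : ∀ a b : S, m a b = m b a)

include hD hsym

open Classical in
/-- retraction onto the generators in `D`, killing the others -/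
noncomputable def retr : PresentedGroup (artinRels m) →* PresentedGroup (artinRels m) :=
  PresentedGroup.toGroup (f := fun t => if t ∈ D then PresentedGroup.of t else 1)
    (rel_cond _ (by
      intro a b hab
      by_cases ha : a ∈ D <;> by_cases hb : b ∈ D
      · simp only [ha, hb, if_true]
        have := mk_piWord_eq m hab
        rw [hom_piWord, hom_piWord] at this
        exact this
      · have hne : a ≠ b := fun h => hb (h ▸ ha)
        have h2 : m a b = 2 := m_eq_two_of_not_adj hsym hne (fun h => hb ((hD a b h).mp ha))
        simp [ha, hb, h2]
      · have hne : a ≠ b := fun h => ha (h ▸ hb)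
        have h2 : m a b = 2 := m_eq_two_of_not_adj hsym hne (fun h => ha ((hD a b h).mpr hb))
        simp [ha, hb, h2]
      · simp [ha, hb]))

lemma retr_of_mem {t : S} (ht : t ∈ D) :
    retr m D hD hsym (PresentedGroup.of t) = PresentedGroup.of t := by
  classical
  rw [retr, PresentedGroup.toGroup.of, if_pos ht]

lemma retr_of_not_mem {t : S} (ht : t ∉ D) :
    retr m D hD hsym (PresentedGroup.of t) = 1 := by
  classical
  rw [retr, PresentedGroup.toGroup.of, if_neg ht]

lemma retr_fix {x : PresentedGroup (artinRels m)}
    (hx : x ∈ Subgroup.closure (PresentedGroup.of '' D)) : retr m D hD hsym x = x := by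
  refine MonoidHom.eqOn_closure (f := retr m D hD hsym) (g := MonoidHom.id _) ?_ hx
  rintro _ ⟨t, ht, rfl⟩
  simp [retr_of_mem m D hD hsym ht]

lemma retr_kill {E : Set S} (hE : E ⊆ Dᶜ) {x : PresentedGroup (artinRels m)}
    (hx : x ∈ Subgroup.closure (PresentedGroup.of '' E)) : retr m D hD hsym x = 1 := by
  have : Subgroup.closure (PresentedGroup.of '' E) ≤ (retr m D hD hsym).ker := by
    rw [Subgroup.closure_le]
    rintro _ ⟨t, ht, rfl⟩
    simp [MonoidHom.mem_ker, retr_of_not_mem m D hD hsym (hE ht)]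
  exact this hx

lemma inter_bot :
    Subgroup.closure (PresentedGroup.of '' D) ⊓
      Subgroup.closure ((PresentedGroup.of : S → PresentedGroup (artinRels m)) '' Dᶜ) = ⊥ := by
  rw [eq_bot_iff]
  rintro x ⟨h1, h2⟩
  have := retr_fix m D hD hsym h1
  rw [retr_kill m D hD hsym (le_refl Dᶜ) h2] at this
  simpa using this.symm

lemma commute_gen {a b : S} (ha : a ∈ D) (hb : b ∈ Dᶜ) :
    Commute (PresentedGroup.of a : PresentedGroup (artinRels m)) (PresentedGroup.of b) := by
  have hne : a ≠ b := fun h => hb (h ▸ ha)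
  exact commute_of_eq_two (m_eq_two_of_not_adj hsym hne (fun h => hb ((hD a b h).mp ha)))

omit hD hsym

lemma commute_closure {G : Type*} [Group G] {s t : Set G}
    (h : ∀ x ∈ s, ∀ y ∈ t, Commute x y) :
    ∀ x ∈ Subgroup.closure s, ∀ y ∈ Subgroup.closure t, Commute x y := by
  have step : ∀ y ∈ t, ∀ x ∈ Subgroup.closure s, Commute x y := by
    intro y hy x hx
    induction hx using Subgroup.closure_induction with
    | mem z hz => exact h z hz y hy
    | one => exact Commute.one_left y
    | mul a b _ _ ha hb => exact ha.mul_left hb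
    | inv a _ ha => exact ha.inv_left
  intro x hx y hy
  induction hy using Subgroup.closure_induction with
  | mem z hz => exact step z hz x hx
  | one => exact Commute.one_right x
  | mul a b _ _ ha hb => exact ha.mul_right hb
  | inv a _ ha => exact ha.inv_right

include hD hsym

lemma commute_DDc : ∀ x ∈ Subgroup.closure (PresentedGroup.of '' D),
    ∀ y ∈ Subgroup.closure ((PresentedGroup.of : S → PresentedGroup (artinRels m)) '' Dᶜ),
    Commute x y := by
  apply commute_closure
  rintro _ ⟨a, ha, rfl⟩ _ ⟨b, hb, rfl⟩
  exact commute_gen m D hD hsym ha hb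

lemma decomp (g : PresentedGroup (artinRels m)) :
    ∃ u ∈ Subgroup.closure (PresentedGroup.of '' D),
      ∃ v ∈ Subgroup.closure ((PresentedGroup.of : S → PresentedGroup (artinRels m)) '' Dᶜ),
        g = u * v := by
  have hcomm := commute_DDc m D hD hsym
  induction g with
  | H z =>
    induction z using FreeGroup.induction_on with
    | C1 => exact ⟨1, one_mem _, 1, one_mem _, by simp⟩
    | of x =>
      by_cases hx : x ∈ D
      · exact ⟨PresentedGroup.of x, Subgroup.subset_closure ⟨x, hx, rfl⟩, 1, one_mem _, by rw [mul_one]; rfl⟩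
      · exact ⟨1, one_mem _, PresentedGroup.of x, Subgroup.subset_closure ⟨x, hx, rfl⟩, by rw [one_mul]; rfl⟩
    | inv_of x ih =>
      obtain ⟨u, hu, v, hv, he⟩ := ih
      refine ⟨u⁻¹, inv_mem hu, v⁻¹, inv_mem hv, ?_⟩
      rw [map_inv, he, mul_inv_rev]
      exact ((hcomm u hu v hv).inv_inv).eq.symm
    | mul x y ihx ihy =>
      obtain ⟨u1, hu1, v1, hv1, he1⟩ := ihx
      obtain ⟨u2, hu2, v2, hv2, he2⟩ := ihy
      refine ⟨u1 * u2, mul_mem hu1 hu2, v1 * v2, mul_mem hv1 hv2, ?_⟩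
      rw [map_mul, he1, he2]
      calc u1 * v1 * (u2 * v2) = u1 * (v1 * u2) * v2 := by group
        _ = u1 * (u2 * v1) * v2 := by rw [(hcomm u2 hu2 v1 hv1).eq]
        _ = u1 * u2 * (v1 * v2) := by group


lemma support (g : PresentedGroup (artinRels m)) {X : Set S} (hX : X ⊆ Dᶜ) :
    (Subgroup.closure ((PresentedGroup.of : S → PresentedGroup (artinRels m)) '' X)).map
      (MulAut.conj g).toMonoidHom ≤
    Subgroup.closure ((PresentedGroup.of : S → PresentedGroup (artinRels m)) '' Dᶜ) := by
  obtain ⟨u, hu, v, hv, rfl⟩ := decomp m D hD hsym g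
  rintro _ ⟨x, hx, rfl⟩
  have hx' : x ∈ Subgroup.closure ((PresentedGroup.of : S → PresentedGroup (artinRels m)) '' Dᶜ) :=
    Subgroup.closure_mono (Set.image_mono hX) hx
  have hw : v * x * v⁻¹ ∈
      Subgroup.closure ((PresentedGroup.of : S → PresentedGroup (artinRels m)) '' Dᶜ) :=
    mul_mem (mul_mem hv hx') (inv_mem hv)
  have hc := commute_DDc m D hD hsym u hu (v * x * v⁻¹) hw
  have heq : (MulAut.conj (u * v)).toMonoidHom x = v * x * v⁻¹ := by
    simp only [MulEquiv.coe_toMonoidHom, MulAut.conj_apply]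
    calc u * v * x * (u * v)⁻¹ = u * (v * x * v⁻¹) * u⁻¹ := by group
      _ = v * x * v⁻¹ * u * u⁻¹ := by rw [hc.eq]
      _ = v * x * v⁻¹ := by group
  rw [heq]
  exact hw

lemma key (g h : PresentedGroup (artinRels m)) {X Y : Set S} (hX : X ⊆ Dᶜ) (hY : Y ⊆ D) :
    ((Subgroup.closure ((PresentedGroup.of : S → PresentedGroup (artinRels m)) '' X)).map
        (MulAut.conj g).toMonoidHom ⊓
      (Subgroup.closure ((PresentedGroup.of : S → PresentedGroup (artinRels m)) '' Y)).map
        (MulAut.conj h).toMonoidHom = ⊥) ∧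
    ∀ p ∈ (Subgroup.closure ((PresentedGroup.of : S → PresentedGroup (artinRels m)) '' X)).map
        (MulAut.conj g).toMonoidHom,
      ∀ q ∈ (Subgroup.closure ((PresentedGroup.of : S → PresentedGroup (artinRels m)) '' Y)).map
        (MulAut.conj h).toMonoidHom, Commute p q := by
  have hD' : ∀ a b : S, (coxeterGraph m).Adj a b → (a ∈ Dᶜ ↔ b ∈ Dᶜ) :=
    fun a b hab => not_congr (hD a b hab)
  have hP := support m D hD hsym g hX
  have hQ := support m Dᶜ hD' hsym h (X := Y) (by rw [compl_compl]; exact hY)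
  rw [compl_compl] at hQ
  constructor
  · rw [eq_bot_iff]
    intro x hx
    rw [Subgroup.mem_inf] at hx
    have : x ∈ Subgroup.closure ((PresentedGroup.of : S → PresentedGroup (artinRels m)) '' D) ⊓
        Subgroup.closure ((PresentedGroup.of : S → PresentedGroup (artinRels m)) '' Dᶜ) :=
      Subgroup.mem_inf.mpr ⟨hQ hx.2, hP hx.1⟩
    rw [inter_bot m D hD hsym] at this
    exact this
  · intro p hp q hq
    exact (commute_DDc m D hD hsym q (hQ hq) p (hP hp)).symm

end Retr

lemma map_conj_ne_bot (m : S → S → ℕ) (g : PresentedGroup (artinRels m)) {X : Set S} {x₀ : S}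
    (hx₀ : x₀ ∈ X) :
    (Subgroup.closure ((PresentedGroup.of : S → PresentedGroup (artinRels m)) '' X)).map
      (MulAut.conj g).toMonoidHom ≠ ⊥ := by
  intro hbot
  have hm : (MulAut.conj g).toMonoidHom (PresentedGroup.of x₀) ∈
      (Subgroup.closure ((PresentedGroup.of : S → PresentedGroup (artinRels m)) '' X)).map
        (MulAut.conj g).toMonoidHom :=
    Subgroup.mem_map_of_mem _ (Subgroup.subset_closure ⟨x₀, hx₀, rfl⟩)
  rw [hbot, Subgroup.mem_bot] at hm
  have : (PresentedGroup.of x₀ : PresentedGroup (artinRels m)) = 1 :=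
    (MulAut.conj g).injective (hm.trans (map_one (MulAut.conj g)).symm)
  exact of_ne_one m x₀ this

end Scratch

open Scratch in
/-- if the Coxeter graph `Γ` is not connected, then the graph of
irreducible parabolic subgroups `C_parab(Γ)` has diameter at most `2`. -/
theorem statement16 {S : Type*} (m : S → S → ℕ) (hsym : ∀ a b : S, m a b = m b a)
    (hdisc : ¬(coxeterGraph m).Connected) :
    ∀ P Q : {P : Subgroup (PresentedGroup (artinRels m)) // IsProperIrredParabolic m P},
      (parabGraph m).Reachable P Q ∧ (parabGraph m).dist P Q ≤ 2 := by
  intro P Q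
  obtain ⟨g, X, ⟨x₀, hx₀⟩, hXuniv, hXconn, hPeq⟩ := P.2
  obtain ⟨h, Y, ⟨y₀, hy₀⟩, hYuniv, hYconn, hQeq⟩ := Q.2
  have hPbot : P.1 ≠ ⊥ := by rw [hPeq]; exact map_conj_ne_bot m g hx₀
  have hXreach : ∀ x ∈ X, (coxeterGraph m).Reachable x₀ x := by
    intro x hx
    have := (hXconn.preconnected ⟨x₀, hx₀⟩ ⟨x, hx⟩).map
      (SimpleGraph.Embedding.induce X).toHom
    simpa using this
  have hYreach : ∀ y ∈ Y, (coxeterGraph m).Reachable y₀ y := by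
    intro y hy
    have := (hYconn.preconnected ⟨y₀, hy₀⟩ ⟨y, hy⟩).map
      (SimpleGraph.Embedding.induce Y).toHom
    simpa using this
  obtain ⟨a, b, hab⟩ : ∃ a b : S, ¬ (coxeterGraph m).Reachable a b := by
    by_contra hc
    push_neg at hc
    haveI : Nonempty S := ⟨x₀⟩
    exact hdisc (SimpleGraph.Connected.mk (fun u v => hc u v))
  by_cases hr : (coxeterGraph m).Reachable x₀ y₀
  · -- same component: go through a cyclic parabolic in another component
    obtain ⟨s, hs⟩ : ∃ s : S, ¬ (coxeterGraph m).Reachable x₀ s := by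
      by_contra hc
      push_neg at hc
      exact hab ((hc a).symm.trans (hc b))
    set D : Set S := {t | (coxeterGraph m).Reachable s t} with hDdef
    have hD : ∀ a b : S, (coxeterGraph m).Adj a b → (a ∈ D ↔ b ∈ D) :=
      fun a b hadj =>
        ⟨fun h' => h'.trans hadj.reachable, fun h' => h'.trans hadj.symm.reachable⟩
    have hXD : X ⊆ Dᶜ := by
      intro x hx hxD
      exact hs ((hXreach x hx).trans (SimpleGraph.Reachable.symm hxD))
    have hYD : Y ⊆ Dᶜ := by
      intro y hy hyD
      exact hs (hr.trans ((hYreach y hy).trans (SimpleGraph.Reachable.symm hyD)))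
    have hsD : ({s} : Set S) ⊆ D := Set.singleton_subset_iff.mpr (SimpleGraph.Reachable.refl s)
    set Msub : Subgroup (PresentedGroup (artinRels m)) :=
      (Subgroup.closure ((PresentedGroup.of : S → PresentedGroup (artinRels m)) '' {s})).map
        (MulAut.conj (1 : PresentedGroup (artinRels m))).toMonoidHom with hMdef
    have hMparab : IsProperIrredParabolic m Msub := by
      refine ⟨1, {s}, ⟨s, rfl⟩, ?_, ?_, hMdef⟩
      · intro he
        have hxs : x₀ ∈ ({s} : Set S) := he ▸ Set.mem_univ x₀
        have hxs' : x₀ = s := hxs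
        exact hs (by rw [hxs'])
      · haveI : Nonempty ({s} : Set S) := ⟨⟨s, rfl⟩⟩
        apply SimpleGraph.Connected.mk
        intro u v
        have huv : u = v := Subtype.ext ((Set.mem_singleton_iff.mp u.2).trans
          (Set.mem_singleton_iff.mp v.2).symm)
        rw [huv]
    set Mv : {P : Subgroup (PresentedGroup (artinRels m)) // IsProperIrredParabolic m P} :=
      ⟨Msub, hMparab⟩ with hMvdef
    have hkeyP := key m D hD hsym g 1 hXD hsD
    have hkeyQ := key m D hD hsym h 1 hYD hsD
    rw [← hPeq] at hkeyP
    rw [← hQeq] at hkeyQ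
    have hPM : P.1 ⊓ Mv.1 = ⊥ := hkeyP.1
    have hQM : Q.1 ⊓ Mv.1 = ⊥ := hkeyQ.1
    have hPneM : P ≠ Mv := by
      intro he
      apply hPbot
      rw [← hPM, he, inf_idem]
    have hQbot : Q.1 ≠ ⊥ := by rw [hQeq]; exact map_conj_ne_bot m h hy₀
    have hQneM : Q ≠ Mv := by
      intro he
      apply hQbot
      rw [← hQM, he, inf_idem]
    have hadjPM : (parabGraph m).Adj P Mv :=
      show _ ∧ _ from ⟨hPneM, Or.inr (Or.inr ⟨hPM, hkeyP.2⟩)⟩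
    have hadjQM : (parabGraph m).Adj Q Mv :=
      show _ ∧ _ from ⟨hQneM, Or.inr (Or.inr ⟨hQM, hkeyQ.2⟩)⟩
    refine ⟨⟨SimpleGraph.Walk.cons hadjPM (SimpleGraph.Walk.cons hadjQM.symm
      SimpleGraph.Walk.nil)⟩, ?_⟩
    have hle := SimpleGraph.dist_le
      (SimpleGraph.Walk.cons hadjPM (SimpleGraph.Walk.cons hadjQM.symm SimpleGraph.Walk.nil))
    simp only [SimpleGraph.Walk.length_cons, SimpleGraph.Walk.length_nil] at hle
    omega
  · -- different components: directly adjacent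
    set D : Set S := {t : S | (coxeterGraph m).Reachable y₀ t} with hDdef
    have hD : ∀ a b : S, (coxeterGraph m).Adj a b → (a ∈ D ↔ b ∈ D) :=
      fun a b hadj =>
        ⟨fun h' => h'.trans hadj.reachable, fun h' => h'.trans hadj.symm.reachable⟩
    have hXD : X ⊆ Dᶜ := by
      intro x hx hxD
      exact hr ((hXreach x hx).trans (SimpleGraph.Reachable.symm hxD))
    have hYD : Y ⊆ D := fun y hy => hYreach y hy
    have hkey := key m D hD hsym g h hXD hYD
    rw [← hPeq, ← hQeq] at hkey
    have hPneQ : P ≠ Q := by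
      intro he
      apply hPbot
      rw [← hkey.1, he, inf_idem]
    have hadj : (parabGraph m).Adj P Q := show _ ∧ _ from ⟨hPneQ, Or.inr (Or.inr ⟨hkey.1, hkey.2⟩)⟩
    refine ⟨hadj.reachable, ?_⟩
    have hle := SimpleGraph.dist_le hadj.toWalk
    simp only [SimpleGraph.Walk.length_cons, SimpleGraph.Walk.length_nil] at hle
    omega
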